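/- arXiv:1406.1210 — 4 statements merged into one kernel-verified Lean document; each statement's English description precedes it below -/
import Mathlib

section
/- Let 1 < p < 2. There exist constants c, C > 0 such that for all real t and all 0 < η ≤ 1: if t ∈ [-η, η] then |1+t|^p ≥ 1 + p·t + (1/2)·p·(p-1)·t² - C·η·t², and if |t| > η then |1+t|^p ≥ 1 + p·t + c·η^(2-p)·|t|^p. -/
open Real Set

lemma hda (p x : ℝ) (hx : 0 < 1 + x) :
    HasDerivAt (fun t : ℝ => (1+t)^p) (p * (1+x)^(p-1)) x := by
  have h1 : HasDerivAt (fun t : ℝ => 1 + t) 1 x := (hasDerivAt_id x).const_add 1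
  have h2 := (Real.hasDerivAt_rpow_const (p := p) (x := 1+x) (Or.inl hx.ne')).comp x h1
  simpa [Function.comp_def] using h2

lemma contA (p : ℝ) (hp : 0 ≤ p) : Continuous (fun t : ℝ => (1+t)^p) :=
  (continuous_const.add continuous_id).rpow_const (fun _ => Or.inr hp)

lemma hdG (p x : ℝ) (hx : 0 < 1 + x) (K : ℝ) :
    HasDerivAt (fun t : ℝ => (1+t)^p - (1 + p*t + (1/2)*p*(p-1)*t^2 - K*t^3))
      (p * (1+x)^(p-1) - (p + p*(p-1)*x - 3*K*x^2)) x := by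
  have ha := hda p x hx
  have h1 : HasDerivAt (fun t:ℝ => 1 + p*t + (1/2)*p*(p-1)*t^2 - K*t^3)
      (p + p*(p-1)*x - 3*K*x^2) x := by
    have h2 : HasDerivAt (fun t:ℝ => p * t) p x := by
      simpa using (hasDerivAt_id x).const_mul p
    have h3 : HasDerivAt (fun t:ℝ => (1/2)*p*(p-1) * t^2) ((1/2)*p*(p-1)*(2*x)) x := by
      simpa using (hasDerivAt_pow 2 x).const_mul ((1/2)*p*(p-1))
    have h4 : HasDerivAt (fun t:ℝ => K * t^3) (K*(3*x^2)) x := by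
      simpa using (hasDerivAt_pow 3 x).const_mul K
    have h5 := (((h2.add h3).const_add 1).sub h4)
    convert h5 using 2 <;> first | rfl | (simp only [Pi.add_apply, Pi.sub_apply]; ring) | ring
  exact ha.sub h1

lemma L1 (p : ℝ) (hp1 : 1 < p) (hp2 : p < 2) :
    ∀ t : ℝ, -1 ≤ t → t ≤ 0 →
      1 + p*t + (1/2)*p*(p-1)*t^2 ≤ (1+t)^p := by
  set G : ℝ → ℝ := fun t => (1+t)^p - (1 + p*t + (1/2)*p*(p-1)*t^2 - 0*t^3) with hGdef
  have hanti : AntitoneOn G (Icc (-1) 0) := by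
    apply antitoneOn_of_deriv_nonpos (convex_Icc _ _)
    · exact ((contA p (by linarith)).sub (by continuity)).continuousOn
    · rw [interior_Icc]
      intro x hx
      have hx1 : 0 < 1 + x := by linarith [hx.1]
      exact ((hdG p x hx1 0).differentiableAt).differentiableWithinAt
    · rw [interior_Icc]
      intro x hx
      have hx1 : 0 < 1 + x := by linarith [hx.1]
      rw [(hdG p x hx1 0).deriv]
      have hber := rpow_one_add_le_one_add_mul_self (s := x) (by linarith [hx.1])
        (p := p-1) (by linarith) (by linarith)
      nlinarith [mul_le_mul_of_nonneg_left hber (by linarith : (0:ℝ) ≤ p)]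
  intro t h1 h0
  have := hanti ⟨h1, h0⟩ ⟨by norm_num, le_refl 0⟩ h0
  simp only [hGdef] at this
  norm_num at this
  nlinarith [this]


lemma L2 (p : ℝ) (hp1 : 1 < p) (hp2 : p < 2) :
    ∀ t : ℝ, 0 ≤ t →
      1 + p*t + (1/2)*p*(p-1)*t^2 - (p*(p-1)*(2-p)/3)*t^3 ≤ (1+t)^p := by
  set K : ℝ := p*(p-1)*(2-p)/3 with hK
  set F : ℝ → ℝ := fun t => (1+t)^p - (1 + p*t + (1/2)*p*(p-1)*t^2 - K*t^3) with hFdef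
  have hmono : MonotoneOn F (Ici 0) := by
    apply monotoneOn_of_deriv_nonneg (convex_Ici _)
    · exact ((contA p (by linarith)).sub (by continuity)).continuousOn
    · rw [interior_Ici]
      intro x hx
      have hx1 : 0 < 1 + x := by simp at hx; linarith
      exact ((hdG p x hx1 K).differentiableAt).differentiableWithinAt
    · rw [interior_Ici]
      intro x hx
      simp only [mem_Ioi] at hx
      have hx1 : 0 < 1 + x := by linarith
      rw [(hdG p x hx1 K).deriv]
      set A : ℝ := (1+x)^(p-1) with hA
      have hA0 : 0 ≤ A := rpow_nonneg hx1.le _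
      have hber : (1+x)^(2-p) ≤ 1 + (2-p)*x :=
        rpow_one_add_le_one_add_mul_self (by linarith) (by linarith) (by linarith)
      have hid : A * (1+x)^(2-p) = 1 + x := by
        rw [hA, ← Real.rpow_add hx1]
        norm_num
      have key : 1 + x ≤ A * (1 + (2-p)*x) := by
        calc 1 + x = A * (1+x)^(2-p) := hid.symm
        _ ≤ A * (1 + (2-p)*x) := mul_le_mul_of_nonneg_left hber hA0
      have hd : (0:ℝ) < 1 + (2-p)*x := by nlinarith
      have h3 : p*(1+x) ≤ p * (A * (1+(2-p)*x)) :=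
        mul_le_mul_of_nonneg_left key (by linarith)
      have h4 : 0 ≤ (p*A - (p + p*(p-1)*x - 3*K*x^2)) * (1+(2-p)*x) := by
        rw [hK]
        have hcube : 0 ≤ p*(p-1)*(2-p)^2*x^3 := by
          have e1 : (0:ℝ) ≤ p*(p-1) := by nlinarith
          have e2 : (0:ℝ) ≤ (2-p)^2 := sq_nonneg _
          have e3 : (0:ℝ) ≤ x^3 := by positivity
          nlinarith [mul_nonneg (mul_nonneg e1 e2) e3]
        nlinarith [h3, hcube]
      nlinarith [h4, hd, mul_pos hd hd]
  intro t ht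
  have := hmono (self_mem_Ici) (mem_Ici.2 ht) ht
  simp only [hFdef] at this
  norm_num at this
  nlinarith [this]


lemma L3 (p c : ℝ) (hp1 : 1 < p) (hp2 : p < 2) (hc0 : 0 ≤ c)
    (hcA : c ≤ 1 - (2:ℝ)^(1-p)) (hcB : c ≤ (2:ℝ)^p - 1 - p) :
    ∀ t : ℝ, 1 ≤ t → 1 + p*t + c*t^p ≤ (1+t)^p := by
  set F : ℝ → ℝ := fun t => (1+t)^p - (1 + p*t + c*t^p) with hFdef
  have hdF : ∀ x : ℝ, 1 ≤ x →
      HasDerivAt F (p * (1+x)^(p-1) - (p + c*(p*x^(p-1)))) x := by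
    intro x hx
    have hx0 : (0:ℝ) < x := by linarith
    have ha := hda p x (by linarith)
    have hb : HasDerivAt (fun t : ℝ => t^p) (p * x^(p-1)) x :=
      Real.hasDerivAt_rpow_const (Or.inl hx0.ne')
    have h2 : HasDerivAt (fun t:ℝ => p * t) p x := by
      simpa using (hasDerivAt_id x).const_mul p
    have hb2 : HasDerivAt (fun t:ℝ => 1 + p*t + c*t^p) (p + c*(p*x^(p-1))) x := by
      simpa [add_assoc] using ((h2.add (hb.const_mul c)).const_add 1)
    exact ha.sub hb2
  have hmono : MonotoneOn F (Ici 1) := by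
    apply monotoneOn_of_deriv_nonneg (convex_Ici _)
    · apply Continuous.continuousOn
      apply (contA p (by linarith)).sub
      apply (continuous_const.add (continuous_const.mul continuous_id)).add
      exact continuous_const.mul (continuous_id.rpow_const (fun _ => Or.inr (by linarith)))
    · rw [interior_Ici]
      intro x hx
      exact ((hdF x (le_of_lt hx)).differentiableAt).differentiableWithinAt
    · rw [interior_Ici]
      intro x hx
      simp only [mem_Ioi] at hx
      rw [(hdF x hx.le).deriv]
      set A : ℝ := (1+x)^(p-1) with hA
      set B : ℝ := x^(p-1) with hB
      have hB0 : 0 ≤ B := rpow_nonneg (by linarith) _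
      have hA2 : (2:ℝ)^(p-1) ≤ A := by
        apply rpow_le_rpow (by norm_num) (by linarith) (by linarith)
      have hAB : B ≤ A := by
        apply rpow_le_rpow (by linarith) (by linarith) (by linarith)
      have hθ : (2:ℝ)^(1-p) * (2:ℝ)^(p-1) = 1 := by
        rw [← Real.rpow_add (by norm_num)]
        norm_num
      have hθ1 : (2:ℝ)^(1-p) < 1 :=
        rpow_lt_one_of_one_lt_of_neg (by norm_num) (by linarith)
      have hθ0 : (0:ℝ) < (2:ℝ)^(1-p) := rpow_pos_of_pos (by norm_num) _
      have hkey : 1 + (1 - (2:ℝ)^(1-p))*B ≤ A := by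
        nlinarith [mul_le_mul_of_nonneg_left hA2 hθ0.le,
          mul_le_mul_of_nonneg_left hAB (by linarith : (0:ℝ) ≤ 1 - (2:ℝ)^(1-p))]
      have hcB' : c * B ≤ (1 - (2:ℝ)^(1-p)) * B :=
        mul_le_mul_of_nonneg_right hcA hB0
      nlinarith [mul_le_mul_of_nonneg_left hkey (by linarith : (0:ℝ) ≤ p),
        mul_le_mul_of_nonneg_left hcB' (by linarith : (0:ℝ) ≤ p)]
  intro t ht
  have h1 := hmono (self_mem_Ici) (mem_Ici.2 ht) ht
  have hF1 : 0 ≤ F 1 := by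
    simp only [hFdef]
    norm_num
    nlinarith [hcB]
  have : 0 ≤ F t := le_trans hF1 h1
  simp only [hFdef] at this
  linarith

lemma L4 (p c : ℝ) (hp1 : 1 < p) (hp2 : p < 2) (hc0 : 0 ≤ c) (hc : c ≤ (p-1)/4) :
    ∀ u : ℝ, 1 ≤ u → c * u^p ≤ (u-1)^p + p*u - 1 := by
  intro u hu
  have h2p4 : (2:ℝ)^p ≤ 4 := by
    have := rpow_le_rpow_of_exponent_le (by norm_num : (1:ℝ) ≤ 2) hp2.le
    rwa [show ((2:ℝ):ℝ)^(2:ℝ) = 4 by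
      rw [show (2:ℝ) = ((2:ℕ):ℝ) by norm_num, Real.rpow_natCast]; norm_num] at this
  rcases le_or_gt u 2 with h2 | h2
  · have hu4 : u^p ≤ 4 := by
      calc u^p ≤ (2:ℝ)^p := rpow_le_rpow (by linarith) h2 (by linarith)
      _ ≤ 4 := h2p4
    have hnn : (0:ℝ) ≤ (u-1)^p := rpow_nonneg (by linarith) _
    have h0 : (0:ℝ) ≤ u^p := rpow_nonneg (by linarith) _
    nlinarith [mul_le_mul_of_nonneg_left hu4 hc0]
  · have h5 : (u/2)^p ≤ (u-1)^p := rpow_le_rpow (by linarith) (by linarith) (by linarith)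
    have h6 : (u/2)^p = u^p/(2:ℝ)^p := Real.div_rpow (by linarith : (0:ℝ) ≤ u) (by norm_num : (0:ℝ) ≤ 2) p
    have h8 : (0:ℝ) < (2:ℝ)^p := rpow_pos_of_pos (by norm_num) _
    have h0 : (0:ℝ) ≤ u^p := rpow_nonneg (by linarith) _
    have h7 : u^p/4 ≤ u^p/(2:ℝ)^p := by
      apply div_le_div_of_nonneg_left h0 h8 h2p4
    have h9 : c * u^p ≤ u^p/4 := by nlinarith
    nlinarith [h5, h6, h7]


set_option maxHeartbeats 1000000 in
/-- quasi-Taylor lower bound for `|1+t|^p`, `1 < p < 2`. -/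
theorem stmt0 (p : ℝ) (hp1 : 1 < p) (hp2 : p < 2) :
    ∃ c C : ℝ, 0 < c ∧ 0 < C ∧ ∀ t η : ℝ, 0 < η → η ≤ 1 →
      (t ∈ Set.Icc (-η) η →
        1 + p * t + (1/2) * p * (p - 1) * t ^ 2 - C * η * t ^ 2 ≤ |1 + t| ^ p) ∧
      (η < |t| →
        1 + p * t + c * η ^ (2 - p) * |t| ^ p ≤ |1 + t| ^ p) := by
  have hex : ∃ c : ℝ, 0 < c ∧ c ≤ p*(p-1)/6 ∧ c ≤ 1 - (2:ℝ)^(1-p) ∧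
      c ≤ (2:ℝ)^p - 1 - p ∧ c ≤ (p-1)/4 := by
    refine ⟨min (min (p*(p-1)/6) (1 - (2:ℝ)^(1-p))) (min ((2:ℝ)^p - 1 - p) ((p-1)/4)),
      ?_, le_trans (min_le_left _ _) (min_le_left _ _),
      le_trans (min_le_left _ _) (min_le_right _ _),
      le_trans (min_le_right _ _) (min_le_left _ _),
      le_trans (min_le_right _ _) (min_le_right _ _)⟩
    have hθ1 : (2:ℝ)^(1-p) < 1 := rpow_lt_one_of_one_lt_of_neg (by norm_num) (by linarith)
    have hB : 1 + p < (2:ℝ)^p := by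
      have := one_add_mul_self_lt_rpow_one_add (by norm_num : (-1:ℝ) ≤ 1) one_ne_zero hp1
      norm_num at this
      linarith
    exact lt_min (lt_min (by nlinarith) (by linarith)) (lt_min (by linarith) (by linarith))
  obtain ⟨c, hc_pos, hc_le1, hc_leA, hc_leB, hc_le4⟩ := hex
  have hc0 : 0 ≤ c := hc_pos.le
  refine ⟨c, 1, hc_pos, one_pos, ?_⟩
  intro t η hη hη1
  have hpp : (0:ℝ) ≤ p*(p-1) := by nlinarith
  constructor
  · rintro ⟨htl, htr⟩
    have ht1 : -1 ≤ t := by linarith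
    have habs : |1+t| = 1+t := abs_of_nonneg (by linarith)
    rw [habs]
    rcases le_or_gt t 0 with h0 | h0
    · have h := L1 p hp1 hp2 t ht1 h0
      nlinarith [h, mul_nonneg hη.le (sq_nonneg t)]
    · have h := L2 p hp1 hp2 t h0.le
      have hK1 : p*(p-1)*(2-p)/3 ≤ 1 := by nlinarith
      have ht3 : (0:ℝ) ≤ t^3 := by positivity
      nlinarith [h, mul_le_mul_of_nonneg_right hK1 ht3,
        mul_le_mul_of_nonneg_right htr (sq_nonneg t)]
  · intro hlt
    have habs_pos : 0 < |t| := lt_trans hη hlt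
    have htp0 : (0:ℝ) ≤ |t|^p := rpow_nonneg (abs_nonneg t) _
    rcases le_or_gt |t| 1 with hle1 | hgt1
    · obtain ⟨ht1, ht1'⟩ := abs_le.mp hle1
      have habs : |1+t| = 1+t := abs_of_nonneg (by linarith)
      have e1 : η^(2-p) ≤ |t|^(2-p) := rpow_le_rpow hη.le hlt.le (by linarith)
      have e2 : |t|^(2-p) * |t|^p = t^2 := by
        rw [← Real.rpow_add habs_pos, show (2-p)+p = ((2:ℕ):ℝ) by norm_num,
          Real.rpow_natCast, sq_abs]
      have e3 : c * η^(2-p) * |t|^p ≤ c * t^2 := by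
        rw [mul_assoc, ← e2]
        exact mul_le_mul_of_nonneg_left (mul_le_mul_of_nonneg_right e1 htp0) hc0
      rw [habs]
      rcases le_or_gt t 0 with h0 | h0
      · have h := L1 p hp1 hp2 t ht1 h0
        have s2 : c*t^2 ≤ (p*(p-1)/6)*t^2 := mul_le_mul_of_nonneg_right hc_le1 (sq_nonneg t)
        have s4 : (0:ℝ) ≤ p*(p-1)*t^2 := mul_nonneg hpp (sq_nonneg t)
        linarith [h, e3, s2, s4]
      · have h := L2 p hp1 hp2 t h0.le
        have hK0 : (0:ℝ) ≤ p*(p-1)*(2-p)/3 := by nlinarith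
        have ht3 : t^3 ≤ t^2 := by nlinarith [sq_nonneg t]
        have hKle : p*(p-1)*(2-p)/3 ≤ p*(p-1)/3 := by
          nlinarith [mul_nonneg (by linarith : (0:ℝ) ≤ p) (sq_nonneg (p-1))]
        have s2 : c*t^2 ≤ (p*(p-1)/6)*t^2 := mul_le_mul_of_nonneg_right hc_le1 (sq_nonneg t)
        have s5 : (p*(p-1)*(2-p)/3)*t^3 ≤ (p*(p-1)*(2-p)/3)*t^2 :=
          mul_le_mul_of_nonneg_left ht3 hK0
        have s6 : (p*(p-1)*(2-p)/3)*t^2 ≤ (p*(p-1)/3)*t^2 :=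
          mul_le_mul_of_nonneg_right hKle (sq_nonneg t)
        linarith [h, e3, s2, s5, s6]
    · have hη1p : η^(2-p) ≤ 1 := rpow_le_one hη.le hη1 (by linarith)
      have e4 : c * η^(2-p) * |t|^p ≤ c * |t|^p := by
        rw [mul_assoc]
        exact mul_le_mul_of_nonneg_left
          (by nlinarith [mul_le_mul_of_nonneg_right hη1p htp0]) hc0
      rcases lt_or_ge t 0 with h0 | h0
      · have habs_t : |t| = -t := abs_of_neg h0
        have hu : 1 ≤ |t| := hgt1.le
        have habs1 : |1+t| = |t| - 1 := by
          rw [habs_t, abs_of_nonpos (by nlinarith [habs_t] : 1 + t ≤ 0)]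
          ring
        have hL4 := L4 p c hp1 hp2 hc0 hc_le4 |t| hu
        have hmt : p*|t| = -(p*t) := by rw [habs_t]; ring
        rw [habs1]
        linarith [e4, hL4]
      · have habs_t : |t| = t := abs_of_nonneg h0
        have ht1 : 1 ≤ t := by rw [habs_t] at hgt1; linarith
        have habs1 : |1+t| = 1+t := abs_of_nonneg (by linarith)
        have hL3 := L3 p c hp1 hp2 hc0 hc_leA hc_leB t ht1
        rw [habs_t] at e4
        rw [habs1, habs_t]
        linarith [hL3, e4]
end

section
/- Let 1 < p < 2. There exist constants c, C > 0 and η₀ > 0 such that for all 0 < η ≤ η₀ and all complex z: if |z| ≤ η then |1+z|^p ≥ 1 + p·Re(z) + (1/2)·p·(p-1)·(Re z)² + (p/2)·(Im z)² - C·η·|z|², and if |z| > η then |1+z|^p ≥ 1 + p·Re(z) + c·η^(2-p)·|z|^p. -/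
open Real

-- derivative of (1+t)^a for 1+t ≠ 0
private lemma hd_rpow {a t : ℝ} (ht : (1:ℝ) + t ≠ 0) :
    HasDerivAt (fun s : ℝ => (1 + s) ^ a) (a * (1 + t) ^ (a - 1)) t := by
  have hbase : HasDerivAt (fun s : ℝ => 1 + s) 1 t := by
    simpa using (hasDerivAt_id t).const_add (1 : ℝ)
  have := (Real.hasDerivAt_rpow_const (x := 1 + t) (p := a) (Or.inl ht)).comp t hbase
  simpa [Function.comp_def] using this

private lemma aux_q2 {q t : ℝ} (hq0 : 0 < q) (hq1 : q < 1) (ht : |t| ≤ 1/2) :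
    |(1 + t) ^ (q - 2) - 1| ≤ 8 * |t| := by
  obtain ⟨ht1, ht2⟩ := abs_le.mp ht
  have hpos : (0:ℝ) < 1 + t := by linarith
  have hinv : (1 + t) ^ (-2 : ℝ) = ((1 + t) ^ 2)⁻¹ := by
    rw [show (-2 : ℝ) = ((-2 : ℤ) : ℝ) by norm_num, Real.rpow_intCast]
    simp [zpow_neg]
  rcases le_total 0 t with h | h
  · -- base ≥ 1
    have h1 : (1 + t) ^ (q - 2) ≤ 1 :=
      Real.rpow_le_one_of_one_le_of_nonpos (by linarith) (by linarith)
    have h2 : (1 + t) ^ (-2 : ℝ) ≤ (1 + t) ^ (q - 2) :=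
      Real.rpow_le_rpow_of_exponent_le (by linarith) (by linarith)
    rw [hinv] at h2
    rw [abs_of_nonneg h, abs_le]
    constructor
    · have hsq : (1:ℝ) ≤ (1 + t) ^ 2 := by nlinarith
      have : 1 - ((1 + t) ^ 2)⁻¹ ≤ 8 * t := by
        rw [← sub_nonneg]
        have hi : (0:ℝ) < ((1 + t) ^ 2)⁻¹ := by positivity
        have hmul : ((1 + t)^2) * ((1 + t)^2)⁻¹ = 1 := by field_simp
        nlinarith
      linarith
    · linarith
  · -- base ≤ 1
    have h1 : (1:ℝ) ≤ (1 + t) ^ (q - 2) :=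
      Real.one_le_rpow_of_pos_of_le_one_of_nonpos hpos (by linarith) (by linarith)
    have h2 : (1 + t) ^ (q - 2) ≤ (1 + t) ^ (-2 : ℝ) :=
      Real.rpow_le_rpow_of_exponent_ge hpos (by linarith) (by linarith)
    rw [hinv] at h2
    rw [abs_of_nonpos h, abs_le]
    constructor
    · linarith
    · have hq4 : (1:ℝ)/4 ≤ (1 + t) ^ 2 := by nlinarith
      have hmul : ((1 + t)^2) * ((1 + t)^2)⁻¹ = 1 := by field_simp
      have : ((1 + t) ^ 2)⁻¹ - 1 ≤ 8 * (-t) := by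
        have hi : (0:ℝ) < ((1 + t) ^ 2)⁻¹ := by positivity
        nlinarith
      linarith

private lemma taylor1d {q u : ℝ} (hq0 : 0 < q) (hq1 : q < 1) (hu : |u| ≤ 1/2) :
    |(1 + u) ^ q - (1 + q * u + q * (q - 1) / 2 * u ^ 2)| ≤ 2 * |u| ^ 3 := by
  set s : Set ℝ := Set.uIcc 0 u with hs
  have hconv : Convex ℝ s := convex_uIcc 0 u
  have habs : ∀ t ∈ s, |t| ≤ |u| := by
    intro t ht
    rw [Set.mem_uIcc] at ht
    rw [abs_le]
    rcases ht with ⟨h1, h2⟩ | ⟨h1, h2⟩ <;>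
      constructor <;> nlinarith [le_abs_self u, neg_abs_le u, abs_nonneg u]
  have hmem : ∀ t ∈ s, |t| ≤ 1/2 ∧ (1:ℝ) + t ≠ 0 := by
    intro t ht
    have h1 := habs t ht
    have h2 : |t| ≤ 1/2 := h1.trans hu
    obtain ⟨ha, hb⟩ := abs_le.mp h2
    exact ⟨h2, ne_of_gt (by linarith)⟩
  -- f, f', f''
  set f : ℝ → ℝ := fun t => (1 + t) ^ q - (1 + q * t + q * (q - 1) / 2 * t ^ 2) with hf
  set f' : ℝ → ℝ := fun t => q * (1 + t) ^ (q - 1) - (q + q * (q - 1) * t) with hf'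
  set f'' : ℝ → ℝ := fun t => q * ((q - 1) * (1 + t) ^ (q - 2)) - q * (q - 1) with hf''
  have hder1 : ∀ t ∈ s, HasDerivAt f (f' t) t := by
    intro t ht
    have hne := (hmem t ht).2
    have h1 := hd_rpow (a := q) hne
    have h2 : HasDerivAt (fun t : ℝ => 1 + q * t + q * (q - 1) / 2 * t ^ 2)
        (q + q * (q - 1) * t) t := by
      have := ((hasDerivAt_id t).const_mul q).const_add 1 |>.add
        (((hasDerivAt_pow 2 t)).const_mul (q * (q - 1) / 2))
      exact this.congr_deriv (by ring)
    exact h1.sub h2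
  have hder2 : ∀ t ∈ s, HasDerivAt f' (f'' t) t := by
    intro t ht
    have hne := (hmem t ht).2
    have h1 := (hd_rpow (a := q - 1) hne).const_mul q
    have h2 : HasDerivAt (fun t : ℝ => q + q * (q - 1) * t) (q * (q - 1)) t := by
      simpa using ((hasDerivAt_id t).const_mul (q * (q - 1))).const_add q
    have := h1.sub h2
    have he : q - 1 - 1 = q - 2 := by ring
    rw [he] at this
    exact this
  -- bound on f''
  have hbound2 : ∀ t ∈ s, ‖f'' t‖ ≤ 2 * |u| := by
    intro t ht
    have h2 := aux_q2 (t := t) hq0 hq1 (hmem t ht).1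
    have hq : q * (1 - q) ≤ 1/4 := by nlinarith [sq_nonneg (q - 1/2)]
    have : f'' t = q * (q - 1) * ((1 + t) ^ (q - 2) - 1) := by simp [hf'']; ring
    rw [Real.norm_eq_abs, this, abs_mul]
    have habsq : |q * (q - 1)| = q * (1 - q) := by
      rw [abs_mul, abs_of_pos hq0, abs_of_neg (by linarith)]
      ring
    rw [habsq]
    have ht8 : 8 * |t| ≤ 8 * |u| := by linarith [habs t ht]
    nlinarith [abs_nonneg ((1 + t) ^ (q - 2) - 1), abs_nonneg t, abs_nonneg u,
      mul_le_mul hq (h2.trans ht8) (abs_nonneg _) (by norm_num)]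
  -- step 1 : |f' t| ≤ 2|u| * |t| ≤ 2u²
  have hstep1 : ∀ t ∈ s, ‖f' t‖ ≤ 2 * |u| ^ 2 := by
    intro t ht
    have h0 : (0:ℝ) ∈ s := Set.left_mem_uIcc
    have := hconv.norm_image_sub_le_of_norm_hasDerivWithin_le
      (fun x hx => (hder2 x hx).hasDerivWithinAt) hbound2 h0 ht
    have hf'0 : f' 0 = 0 := by simp [hf']
    rw [hf'0, sub_zero, sub_zero] at this
    calc ‖f' t‖ ≤ 2 * |u| * ‖t‖ := this
      _ ≤ 2 * |u| ^ 2 := by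
          rw [Real.norm_eq_abs]
          nlinarith [habs t ht, abs_nonneg t, abs_nonneg u]
  -- step 2
  have h0 : (0:ℝ) ∈ s := Set.left_mem_uIcc
  have hu' : u ∈ s := Set.right_mem_uIcc
  have := hconv.norm_image_sub_le_of_norm_hasDerivWithin_le
    (fun x hx => (hder1 x hx).hasDerivWithinAt) hstep1 h0 hu'
  have hf0 : f 0 = 0 := by simp [hf]
  rw [hf0, sub_zero, sub_zero, Real.norm_eq_abs, Real.norm_eq_abs] at this
  calc |f u| ≤ 2 * |u| ^ 2 * |u| := this
    _ = 2 * |u| ^ 3 := by ring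

set_option maxHeartbeats 1000000 in
private lemma expand2d {p : ℝ} (hp1 : 1 < p) (hp2 : p < 2) {z : ℂ} (hz : ‖z‖ ≤ 1/8) :
    1 + p * z.re + p * (p - 1) / 2 * z.re ^ 2 + p / 2 * z.im ^ 2
        - 55 * ‖z‖ ^ 3
      ≤ ‖1 + z‖ ^ p := by
  set x := z.re; set y := z.im; set r := ‖z‖ with hr
  have hr0 : 0 ≤ r := norm_nonneg z
  have hxy : x ^ 2 + y ^ 2 = r ^ 2 := by
    rw [hr, Complex.sq_norm, Complex.normSq_apply]; ring
  have hxr : |x| ≤ r := Complex.abs_re_le_norm z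
  obtain ⟨hx1, hx2⟩ := abs_le.mp hxr
  set u : ℝ := 2 * x + r ^ 2 with hu
  have h1u : (0:ℝ) ≤ 1 + u := by nlinarith
  have habs1z : ‖1 + z‖ ^ 2 = 1 + u := by
    rw [Complex.sq_norm, Complex.normSq_apply]
    simp only [Complex.add_re, Complex.add_im, Complex.one_re, Complex.one_im]
    nlinarith
  have hsq : ‖1 + z‖ = Real.sqrt (1 + u) := by
    rw [← habs1z]
    exact (Real.sqrt_sq (norm_nonneg _)).symm
  have hrpow : ‖1 + z‖ ^ p = (1 + u) ^ (p / 2) := by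
    rw [hsq, Real.sqrt_eq_rpow, ← Real.rpow_mul h1u]
    ring_nf
  have hq0 : 0 < p / 2 := by linarith
  have hq1 : p / 2 < 1 := by linarith
  have hr1 : r ≤ 1 := by linarith
  have huabs : |u| ≤ 3 * r := by
    rw [hu, abs_le]; constructor <;> nlinarith
  have hu2 : |u| ≤ 1 / 2 := by linarith
  have ht := taylor1d hq0 hq1 hu2
  have hcube : |u| ^ 3 ≤ 27 * r ^ 3 := by
    calc |u| ^ 3 ≤ (3 * r) ^ 3 := pow_le_pow_left₀ (abs_nonneg u) huabs 3
      _ = 27 * r ^ 3 := by ring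
  have hlow : 1 + (p/2) * u + (p/2) * ((p/2) - 1) / 2 * u ^ 2 - 2 * |u| ^ 3
      ≤ (1 + u) ^ (p/2) := by
    have := (abs_le.mp ht).1
    linarith
  set w : ℝ := 4 * x * r ^ 2 + r ^ 4 with hw
  have hpq0 : 0 ≤ p * (2 - p) := mul_nonneg (by linarith) (by linarith)
  have hpq1 : p * (2 - p) ≤ 1 := by nlinarith [sq_nonneg (p - 1)]
  have hwub : w ≤ 5 * r ^ 3 := by
    rw [hw]
    nlinarith [mul_nonneg (sub_nonneg.mpr hx2) (sq_nonneg r), mul_nonneg (sub_nonneg.mpr hr1) (pow_nonneg hr0 3)]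
  have h4 : p * (2 - p) * w ≤ 8 * r ^ 3 := by
    rcases le_or_gt 0 w with h | h
    · calc p * (2 - p) * w ≤ 1 * w := by nlinarith
        _ ≤ 8 * r ^ 3 := by nlinarith
    · have : p * (2 - p) * w ≤ 0 := mul_nonpos_of_nonneg_of_nonpos hpq0 h.le
      nlinarith
  have hy2 : y ^ 2 = r ^ 2 - x ^ 2 := by linarith
  rw [hrpow]
  have hid : 1 + (p/2) * u + (p/2) * ((p/2) - 1) / 2 * u ^ 2
      = 1 + p * x + p * (p - 1) / 2 * x ^ 2 + p / 2 * y ^ 2 + (p * (p - 2) / 8) * w := by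
    rw [hu, hw, hy2]; ring
  have h54 : 2 * |u| ^ 3 ≤ 54 * r ^ 3 := by linarith
  rw [hid] at hlow
  have h5 : p * (p - 2) / 8 * w = -(p * (2 - p) * w) / 8 := by ring
  nlinarith [hlow, h4, h54, h5]

private lemma hpos {p : ℝ} (hp1 : 1 < p) (hp2 : p < 2) {z : ℂ} (hz : z ≠ 0) :
    1 + p * z.re < ‖1 + z‖ ^ p := by
  set a := ‖1 + z‖ with ha
  have ha0 : 0 ≤ a := norm_nonneg _
  have hre : 1 + z.re ≤ a := by
    have := Complex.re_le_norm (1 + z)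
    simpa using this
  rcases eq_or_ne a 1 with h1 | h1
  · -- |1+z| = 1, z ≠ 0 ⇒ re z < 0
    have hsq : (1 + z.re) ^ 2 + z.im ^ 2 = 1 := by
      have : a ^ 2 = 1 := by rw [h1]; norm_num
      rw [ha, Complex.sq_norm, Complex.normSq_apply] at this
      simp only [Complex.add_re, Complex.add_im, Complex.one_re, Complex.one_im] at this
      nlinarith
    have hzpos : 0 < z.re ^ 2 + z.im ^ 2 := by
      have := Complex.normSq_pos.mpr hz
      rw [Complex.normSq_apply] at this
      nlinarith
    have hneg : z.re < 0 := by nlinarith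
    rw [h1, Real.one_rpow]
    nlinarith
  · have hb : -1 ≤ a - 1 := by linarith
    have := one_add_mul_self_lt_rpow_one_add hb (by intro h; apply h1; linarith) hp1
    have he : (1 + (a - 1)) = a := by ring
    rw [he] at this
    nlinarith

private lemma hbig {p : ℝ} (hp1 : 1 < p) (hp2 : p < 2) {z : ℂ}
    (hz : max 3 ((24:ℝ) ^ (1/(p-1))) ≤ ‖z‖) :
    1 + p * z.re + (1/8) * ‖z‖ ^ p ≤ ‖1 + z‖ ^ p := by
  set r := ‖z‖ with hr
  have hr3 : (3:ℝ) ≤ r := le_trans (le_max_left _ _) hz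
  have hr0 : (0:ℝ) < r := by linarith
  have ha : r - 1 ≤ ‖1 + z‖ := by
    have h := norm_add_le (1 + z) (-1)
    have h1 : (1 + z) + (-1) = z := by ring
    have h3 : ‖(-1 : ℂ)‖ = 1 := by simp
    rw [h1, h3] at h
    rw [hr]
    linarith
  have ha2 : r / 2 ≤ ‖1 + z‖ := by linarith
  have hp0 : 0 ≤ p := by linarith
  have hstep : (r / 2) ^ p ≤ ‖1 + z‖ ^ p :=
    Real.rpow_le_rpow (by positivity) ha2 hp0
  have hdiv : (r / 2) ^ p = r ^ p / 2 ^ p := Real.div_rpow hr0.le (by norm_num : (0:ℝ) ≤ 2) p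
  have h2p : (2:ℝ) ^ p ≤ 4 := by
    have : (2:ℝ) ^ p ≤ 2 ^ (2:ℝ) := Real.rpow_le_rpow_of_exponent_le (by norm_num) hp2.le
    have h4 : (2:ℝ) ^ (2:ℝ) = 4 := by
      rw [show (2:ℝ) = ((2:ℕ):ℝ) by norm_num, Real.rpow_natCast]; norm_num
    linarith
  have hq : r ^ p / 4 ≤ r ^ p / 2 ^ p := by
    apply div_le_div_of_nonneg_left (Real.rpow_nonneg hr0.le p) _ h2p
    positivity
  -- r^p = r * r^(p-1) ≥ 24 r
  have hsplit : r ^ p = r * r ^ (p - 1) := by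
    rw [← Real.rpow_one_add' hr0.le (by intro h; nlinarith : 1 + (p - 1) ≠ 0)]
    ring_nf
  have h24 : (24:ℝ) ≤ r ^ (p - 1) := by
    have h1 : ((24:ℝ) ^ (1/(p-1))) ^ (p - 1) ≤ r ^ (p - 1) :=
      Real.rpow_le_rpow (by positivity) (le_trans (le_max_right _ _) hz) (by linarith)
    have h2 : ((24:ℝ) ^ (1/(p-1))) ^ (p - 1) = 24 := by
      rw [← Real.rpow_mul (by norm_num)]
      rw [one_div, inv_mul_cancel₀ (by intro h; nlinarith : p - 1 ≠ 0)]
      exact Real.rpow_one 24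
    linarith
  have hrp : 24 * r ≤ r ^ p := by
    rw [hsplit]
    nlinarith
  have hx : z.re ≤ r := le_trans (le_abs_self _) (Complex.abs_re_le_norm z)
  have : 1 + p * z.re + (1/8) * r ^ p ≤ r ^ p / 4 := by nlinarith
  linarith

set_option maxHeartbeats 1000000 in
/-- complex quasi-Taylor lower bound for `|1+z|^p`, `1 < p < 2`. -/
theorem stmt1 (p : ℝ) (hp1 : 1 < p) (hp2 : p < 2) :
    ∃ c C η₀ : ℝ, 0 < c ∧ 0 < C ∧ 0 < η₀ ∧ ∀ η : ℝ, 0 < η → η ≤ η₀ → ∀ z : ℂ,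
      (‖z‖ ≤ η →
        1 + p * z.re + (1/2) * p * (p - 1) * z.re ^ 2 + (p/2) * z.im ^ 2
            - C * η * (‖z‖) ^ 2
          ≤ (‖1 + z‖) ^ p) ∧
      (η < ‖z‖ →
        1 + p * z.re + c * η ^ (2 - p) * (‖z‖) ^ p
          ≤ (‖1 + z‖) ^ p) := by
  have hp0 : (0:ℝ) < p := by linarith
  have hpp : (0:ℝ) < p * (p - 1) := by nlinarith
  set η₀ : ℝ := min (1/8) (p * (p - 1) / 220) with hη₀
  have hη₀pos : 0 < η₀ := lt_min (by norm_num) (by positivity)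
  have hη₀18 : η₀ ≤ 1/8 := min_le_left _ _
  have hη₀p : η₀ ≤ p * (p - 1) / 220 := min_le_right _ _
  set R : ℝ := max 3 ((24:ℝ) ^ (1/(p-1))) with hR
  have hR3 : (3:ℝ) ≤ R := le_max_left _ _
  have hR0 : (0:ℝ) < R := by linarith
  set S : Set ℂ := Metric.closedBall 0 R \ Metric.ball 0 η₀ with hS
  have hScomp : IsCompact S := (isCompact_closedBall 0 R).diff Metric.isOpen_ball
  have hSne : S.Nonempty := by
    refine ⟨(η₀ : ℂ), ?_, ?_⟩
    · rw [Metric.mem_closedBall, dist_zero_right]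
      simp only [Complex.norm_real, Real.norm_eq_abs, abs_of_pos hη₀pos]
      linarith
    · rw [Metric.mem_ball, dist_zero_right]
      simp only [Complex.norm_real, Real.norm_eq_abs, abs_of_pos hη₀pos]
      linarith
  set hfun : ℂ → ℝ := fun w => (‖1 + w‖) ^ p - (1 + p * w.re) with hhfun
  have hcont : Continuous hfun := by
    apply Continuous.sub
    · exact (Real.continuous_rpow_const hp0.le).comp
        (continuous_norm.comp (continuous_const.add continuous_id))
    · exact continuous_const.add (continuous_const.mul Complex.continuous_re)
  obtain ⟨z₀, hz₀S, hminOn⟩ := hScomp.exists_isMinOn hSne hcont.continuousOn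
  set m : ℝ := hfun z₀ with hm
  have hz₀ne : z₀ ≠ 0 := by
    intro h
    have := hz₀S.2
    rw [h] at this
    exact this (Metric.mem_ball_self hη₀pos)
  have hmpos : 0 < m := by
    have := hpos hp1 hp2 hz₀ne
    simp only [hm, hhfun]
    linarith
  have hRppos : (0:ℝ) < R ^ p := Real.rpow_pos_of_pos hR0 p
  set c : ℝ := min (min (p * (p - 1) / 4) (1/8)) (m / R ^ p) with hc
  have hcpos : 0 < c := lt_min (lt_min (by positivity) (by norm_num)) (by positivity)
  have hc1 : c ≤ p * (p - 1) / 4 := le_trans (min_le_left _ _) (min_le_left _ _)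
  have hc2 : c ≤ 1/8 := le_trans (min_le_left _ _) (min_le_right _ _)
  have hc3 : c ≤ m / R ^ p := min_le_right _ _
  refine ⟨c, 60, η₀, hcpos, by norm_num, hη₀pos, ?_⟩
  intro η hη hηη₀ z
  have hη1 : η ≤ 1 := by linarith
  have hr0 : (0:ℝ) ≤ ‖z‖ := norm_nonneg z
  have hη2p1 : η ^ (2 - p) ≤ 1 := Real.rpow_le_one hη.le hη1 (by linarith)
  have hη2p0 : (0:ℝ) ≤ η ^ (2 - p) := Real.rpow_nonneg hη.le _
  constructor
  · -- small case
    intro hzη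
    set r := ‖z‖ with hrdef
    have hr18 : r ≤ 1/8 := by linarith
    have hexp := expand2d hp1 hp2 (z := z) hr18
    have h1 : r ^ 3 ≤ η * r ^ 2 := by nlinarith [sq_nonneg r]
    nlinarith [hexp]
  · -- large case
    intro hzη
    set r := ‖z‖ with hrdef
    have hrpos : 0 < r := lt_trans hη hzη
    have hrp0 : (0:ℝ) ≤ r ^ p := Real.rpow_nonneg hr0 p
    rcases le_or_gt r η₀ with hcase | hcase
    · -- η < r ≤ η₀ : Taylor regime
      have hr18 : r ≤ 1/8 := le_trans hcase hη₀18
      have hexp := expand2d hp1 hp2 (z := z) hr18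
      have hxy : z.re ^ 2 + z.im ^ 2 = r ^ 2 := by
        rw [hrdef, Complex.sq_norm, Complex.normSq_apply]; ring
      -- quadratic lower bound
      have hquad : 1 + p * z.re + p * (p - 1) / 4 * r ^ 2 ≤ ‖1 + z‖ ^ p := by
        have hco : p * (p - 1) / 2 * (z.re ^ 2 + z.im ^ 2)
            ≤ p * (p - 1) / 2 * z.re ^ 2 + p / 2 * z.im ^ 2 := by
          nlinarith [mul_nonneg (mul_nonneg hp0.le (by linarith : (0:ℝ) ≤ 2 - p)) (sq_nonneg z.im)]
        have h55 : 55 * r ^ 3 ≤ p * (p - 1) / 4 * r ^ 2 := by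
          have : r ≤ p * (p - 1) / 220 := le_trans hcase hη₀p
          nlinarith [sq_nonneg r]
        nlinarith [hexp]
      -- c * η^(2-p) * r^p ≤ p(p-1)/4 * r^2
      have hη2p : η ^ (2 - p) ≤ r ^ (2 - p) := Real.rpow_le_rpow hη.le hzη.le (by linarith)
      have hrr : r ^ (2 - p) * r ^ p = r ^ 2 := by
        rw [← Real.rpow_add hrpos]
        norm_num
      have hfinal : c * η ^ (2 - p) * r ^ p ≤ p * (p - 1) / 4 * r ^ 2 := by
        calc c * η ^ (2 - p) * r ^ p ≤ (p * (p - 1) / 4) * (r ^ (2 - p) * r ^ p) := by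
              rw [mul_assoc]
              apply mul_le_mul hc1 (mul_le_mul_of_nonneg_right hη2p hrp0)
                (by positivity) (by positivity)
          _ = p * (p - 1) / 4 * r ^ 2 := by rw [hrr]
      linarith
    · rcases le_or_gt r R with hcase2 | hcase2
      · -- η₀ < r ≤ R : compactness regime
        have hzS : z ∈ S := by
          constructor
          · rw [Metric.mem_closedBall, dist_zero_right]; exact hcase2
          · rw [Metric.mem_ball, dist_zero_right]
            push_neg
            linarith
        have hmin := isMinOn_iff.mp hminOn z hzS
        have hfz : 1 + p * z.re + m ≤ ‖1 + z‖ ^ p := by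
          simp only [hhfun, hm] at hmin ⊢
          linarith
        have hrpR : r ^ p ≤ R ^ p := Real.rpow_le_rpow hr0 hcase2 hp0.le
        have hfinal : c * η ^ (2 - p) * r ^ p ≤ m := by
          calc c * η ^ (2 - p) * r ^ p ≤ c * 1 * R ^ p := by
                apply mul_le_mul (mul_le_mul_of_nonneg_left hη2p1 hcpos.le) hrpR hrp0
                positivity
            _ = c * R ^ p := by ring
            _ ≤ (m / R ^ p) * R ^ p := mul_le_mul_of_nonneg_right hc3 hRppos.le
            _ = m := div_mul_cancel₀ m hRppos.ne'
        linarith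
      · -- r > R : far regime
        have hb := hbig hp1 hp2 (z := z) (le_of_lt hcase2)
        have hfinal : c * η ^ (2 - p) * r ^ p ≤ (1/8) * r ^ p := by
          apply mul_le_mul_of_nonneg_right _ hrp0
          calc c * η ^ (2 - p) ≤ c * 1 := mul_le_mul_of_nonneg_left hη2p1 hcpos.le
            _ = c := mul_one c
            _ ≤ 1/8 := hc2
        linarith
end

section
/- For each finite abelian group G and nonempty subset A ⊆ G: if #(A−A) < (3/2)·#A, then the symmetry group H = Symm(A−A) = {g : (A−A)+g = A−A} satisfies #H ≥ (1/2)·#(A−A), H is a subgroup of G containing A−A's stabilizer, and H ⊆ A−A. -/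
open Pointwise

/-- Kneser-type conclusion: if `#(A-A) < (3/2)#A` then the symmetry
group `H` of `A - A` is large, is a subgroup (equal to the stabilizer of `A-A`),
and is contained in `A - A`. -/
theorem stmt7 (G : Type) [AddCommGroup G] [Fintype G] (A : Set G) (hA : A.Nonempty)
    (h : ((A - A).ncard : ℝ) < (3 / 2) * (A.ncard : ℝ)) :
    (1 / 2 : ℝ) * ((A - A).ncard : ℝ) ≤ ({g : G | g +ᵥ (A - A) = A - A}.ncard : ℝ) ∧
    (∃ H : AddSubgroup G, (H : Set G) = {g : G | g +ᵥ (A - A) = A - A} ∧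
      {g : G | (A - A) + {g} = A - A} ⊆ (H : Set G)) ∧
    {g : G | g +ᵥ (A - A) = A - A} ⊆ A - A := by
  obtain ⟨a0, ha0⟩ := hA
  -- Step 1: for each d ∈ A - A, the set A ∩ (d +ᵥ A) is large.
  have key : ∀ d ∈ A - A, (A.ncard : ℝ) / 2 < ((A ∩ (d +ᵥ A)).ncard : ℝ) := by
    intro d hd
    obtain ⟨a1, ha1, a2, ha2, hda⟩ := hd
    have hsub : A ∪ (d +ᵥ A) ⊆ a1 +ᵥ (A - A) := by
      rintro x (hx | ⟨y, hy, rfl⟩)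
      · exact ⟨x - a1, ⟨x, hx, a1, ha1, rfl⟩, by simp only [vadd_eq_add]; abel⟩
      · exact ⟨y - a2, ⟨y, hy, a2, ha2, rfl⟩, by simp only [vadd_eq_add]; rw [← hda]; beta_reduce; abel⟩
    have hcard1 : (A ∪ (d +ᵥ A)).ncard ≤ (A - A).ncard := by
      calc (A ∪ (d +ᵥ A)).ncard ≤ (a1 +ᵥ (A - A)).ncard :=
            Set.ncard_le_ncard hsub (Set.toFinite _)
        _ = (A - A).ncard := Set.ncard_vadd_set a1 (A - A)
    have heq : (A ∩ (d +ᵥ A)).ncard + (A ∪ (d +ᵥ A)).ncard = A.ncard + (d +ᵥ A).ncard :=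
      Set.ncard_inter_add_ncard_union A (d +ᵥ A)
    have hAeq : (d +ᵥ A).ncard = A.ncard := Set.ncard_vadd_set d A
    have heqR : ((A ∩ (d +ᵥ A)).ncard : ℝ) + ((A ∪ (d +ᵥ A)).ncard : ℝ)
        = (A.ncard : ℝ) + (A.ncard : ℝ) := by
      rw_mod_cast [heq, hAeq]
    have h1 : ((A ∪ (d +ᵥ A)).ncard : ℝ) ≤ ((A - A).ncard : ℝ) := by exact_mod_cast hcard1
    linarith
  -- Step 2: A - A is closed under subtraction.
  have hclosed : ∀ d1 ∈ A - A, ∀ d2 ∈ A - A, d1 - d2 ∈ A - A := by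
    intro d1 hd1 d2 hd2
    have h1 := key d1 hd1
    have h2 := key d2 hd2
    have hne : ((A ∩ (d1 +ᵥ A)) ∩ (A ∩ (d2 +ᵥ A))).Nonempty := by
      by_contra hcon
      rw [Set.not_nonempty_iff_eq_empty] at hcon
      have hd : Disjoint (A ∩ (d1 +ᵥ A)) (A ∩ (d2 +ᵥ A)) :=
        Set.disjoint_iff_inter_eq_empty.mpr hcon
      have hu : (A ∩ (d1 +ᵥ A)).ncard + (A ∩ (d2 +ᵥ A)).ncard
          = ((A ∩ (d1 +ᵥ A)) ∪ (A ∩ (d2 +ᵥ A))).ncard :=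
        (Set.ncard_union_eq hd (Set.toFinite _) (Set.toFinite _)).symm
      have hle : ((A ∩ (d1 +ᵥ A)) ∪ (A ∩ (d2 +ᵥ A))).ncard ≤ A.ncard :=
        Set.ncard_le_ncard (Set.union_subset Set.inter_subset_left Set.inter_subset_left)
          (Set.toFinite _)
      have : ((A ∩ (d1 +ᵥ A)).ncard : ℝ) + ((A ∩ (d2 +ᵥ A)).ncard : ℝ) ≤ (A.ncard : ℝ) := by
        exact_mod_cast hu ▸ hle
      linarith
    obtain ⟨x, ⟨_, b1, hb1, hx1⟩, _, b2, hb2, hx2⟩ := hne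
    refine ⟨b2, hb2, b1, hb1, ?_⟩
    have hxx : d1 + b1 = d2 + b2 := hx1.trans hx2.symm
    rw [sub_eq_sub_iff_add_eq_add, hxx, add_comm]
  have h0 : (0 : G) ∈ A - A := ⟨a0, ha0, a0, ha0, sub_self a0⟩
  -- Step 3: stabilizer equals A - A.
  have hstab : {g : G | g +ᵥ (A - A) = A - A} = A - A := by
    ext g
    constructor
    · intro hg
      have : g + 0 ∈ g +ᵥ (A - A) := ⟨0, h0, rfl⟩
      rw [hg] at this
      simpa using this
    · intro hg
      apply Set.Subset.antisymm
      · rintro _ ⟨s, hs, rfl⟩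
        have : g + s - 0 + 0 = g + s := by abel
        have h1 : g + s - 0 ∈ A - A := by
          have := hclosed (g + s) ?_ 0 h0
          · simpa using this
          · have := hclosed g hg (0 - s) (by simpa using hclosed 0 h0 s hs)
            simpa [sub_sub_cancel] using this
        simpa using h1
      · intro s hs
        refine ⟨s - g, ?_, by simp only [vadd_eq_add]; abel⟩
        exact hclosed s hs g hg
  -- Build the subgroup.
  have hneg : ∀ d ∈ A - A, -d ∈ A - A := fun d hd => by simpa using hclosed 0 h0 d hd
  have hadd : ∀ d1 ∈ A - A, ∀ d2 ∈ A - A, d1 + d2 ∈ A - A := fun d1 h1 d2 h2 => by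
    simpa [sub_neg_eq_add] using hclosed d1 h1 (-d2) (hneg d2 h2)
  let H : AddSubgroup G :=
    { carrier := A - A
      add_mem' := fun ha hb => hadd _ ha _ hb
      zero_mem' := h0
      neg_mem' := fun ha => hneg _ ha }
  refine ⟨?_, ⟨H, ?_, ?_⟩, ?_⟩
  · rw [hstab]; nlinarith [Nat.card_coe_set_eq (A - A)]
  · exact hstab.symm
  · intro g hg
    simp only [Set.mem_setOf_eq] at hg
    have : (0 : G) + g ∈ (A - A) + ({g} : Set G) := Set.add_mem_add h0 rfl
    rw [hg] at this
    exact (by simpa using this : g ∈ A - A)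
  · rw [hstab]
end

section
/- Let 1 < p < 2, d ≥ 1, G(x) = e^{−π|x|²}, t = (2−p)/2, σ = (p−1)/(2−p), and define the operator 𝒯 on L²(ℝ^d) by 𝒯(φ) = G^t · (G^σ ∗ (G^t·φ)). Then 𝒯(G^{p/2}) = (2−p)^{d/2} · G^{p/2}, i.e., G^{p/2} is an eigenfunction with eigenvalue (2−p)^{d/2}. -/
open MeasureTheory

/-- `G^{p/2}` is an eigenfunction of `𝒯(φ) = G^t · (G^σ ∗ (G^t φ))`
with eigenvalue `(2−p)^{d/2}`, where `t = (2−p)/2` and `σ = (p−1)/(2−p)`. -/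
theorem stmt18 (d : ℕ) (hd : 1 ≤ d) (p : ℝ) (hp1 : 1 < p) (hp2 : p < 2) :
    ∀ x : EuclideanSpace ℝ (Fin d),
      Real.exp (-(Real.pi * ((2 - p) / 2) * ‖x‖ ^ 2)) *
          ∫ y : EuclideanSpace ℝ (Fin d),
            Real.exp (-(Real.pi * ((p - 1) / (2 - p)) * ‖x - y‖ ^ 2)) *
              (Real.exp (-(Real.pi * ((2 - p) / 2) * ‖y‖ ^ 2)) *
                Real.exp (-(Real.pi * (p / 2) * ‖y‖ ^ 2))) =
        (2 - p) ^ ((d : ℝ) / 2) * Real.exp (-(Real.pi * (p / 2) * ‖x‖ ^ 2)) := by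
  intro x
  have h2p : (0:ℝ) < 2 - p := by linarith
  have h2p' : (2:ℝ) - p ≠ 0 := ne_of_gt h2p
  -- pointwise rewriting of the integrand (complete the square)
  have key : ∀ y : EuclideanSpace ℝ (Fin d),
      Real.exp (-(Real.pi * ((p - 1) / (2 - p)) * ‖x - y‖ ^ 2)) *
        (Real.exp (-(Real.pi * ((2 - p) / 2) * ‖y‖ ^ 2)) *
          Real.exp (-(Real.pi * (p / 2) * ‖y‖ ^ 2))) =
      Real.exp (-(Real.pi * (p - 1) * ‖x‖ ^ 2)) *
        Real.exp (-(Real.pi * (1 / (2 - p))) * ‖y - (p - 1) • x‖ ^ 2) := by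
    intro y
    rw [← Real.exp_add, ← Real.exp_add, ← Real.exp_add]
    congr 1
    have e1 : ‖x - y‖ ^ 2 = ‖x‖ ^ 2 - 2 * inner ℝ x y + ‖y‖ ^ 2 :=
      norm_sub_sq_real x y
    have e2 : ‖y - (p - 1) • x‖ ^ 2
        = ‖y‖ ^ 2 - 2 * ((p - 1) * inner ℝ y x) + (p - 1) ^ 2 * ‖x‖ ^ 2 := by
      rw [norm_sub_sq_real, real_inner_smul_right, norm_smul, mul_pow, Real.norm_eq_abs,
        sq_abs]
    have e3 : (inner ℝ y x : ℝ) = inner ℝ x y := real_inner_comm x y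
    rw [e1, e2, e3]
    field_simp
    ring
  simp_rw [key]
  rw [integral_const_mul]
  have hshift : ∫ y : EuclideanSpace ℝ (Fin d),
      Real.exp (-(Real.pi * (1 / (2 - p))) * ‖y - (p - 1) • x‖ ^ 2) =
      ∫ y : EuclideanSpace ℝ (Fin d), Real.exp (-(Real.pi * (1 / (2 - p))) * ‖y‖ ^ 2) :=
    integral_sub_right_eq_self
      (fun y => Real.exp (-(Real.pi * (1 / (2 - p))) * ‖y‖ ^ 2)) ((p - 1) • x)
  rw [hshift, GaussianFourier.integral_rexp_neg_mul_sq_norm (by positivity)]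
  have hrank : (Module.finrank ℝ (EuclideanSpace ℝ (Fin d)) : ℝ) = d := by
    simp [finrank_euclideanSpace_fin]
  rw [hrank]
  have hbase : Real.pi / (Real.pi * (1 / (2 - p))) = 2 - p := by
    field_simp
  rw [hbase]
  have hexp : Real.exp (-(Real.pi * ((2 - p) / 2) * ‖x‖ ^ 2)) *
      Real.exp (-(Real.pi * (p - 1) * ‖x‖ ^ 2)) = Real.exp (-(Real.pi * (p / 2) * ‖x‖ ^ 2)) := by
    rw [← Real.exp_add]
    congr 1
    ring
  calc Real.exp (-(Real.pi * ((2 - p) / 2) * ‖x‖ ^ 2)) *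
        (Real.exp (-(Real.pi * (p - 1) * ‖x‖ ^ 2)) * (2 - p) ^ ((d : ℝ) / 2))
      = (Real.exp (-(Real.pi * ((2 - p) / 2) * ‖x‖ ^ 2)) *
          Real.exp (-(Real.pi * (p - 1) * ‖x‖ ^ 2))) * (2 - p) ^ ((d : ℝ) / 2) := by ring
    _ = (2 - p) ^ ((d : ℝ) / 2) * Real.exp (-(Real.pi * (p / 2) * ‖x‖ ^ 2)) := by
        rw [hexp]; ring
end
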